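/- Let λ̃ := max_{0 ≤ m ≤ k} λ_m. Then for every s ∈ [0,1], every m with 0 ≤ m ≤ k, and every r with 1 ≤ r ≤ r_max, ‖ exp(i θ_{m r}(s) P_r) − Σ_{m'=0}^{k} p_{m'}(s) Σ_{r'=1}^{r_max} p_{r'|m'} exp(i θ_{m' r'}(s) P_{r'}) ‖ ≤ 2 (k+1) λ̃ s^{k+1}; that is, every realization of the sampled rotation deviates from the ensemble mean by at most 2(k+1)λ̃ s^{k+1} in operator norm. -/

import Mathlib

open scoped Matrix.Norms.L2Operator
open Matrix

namespace Stmt4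

variable (k : ℕ)

/-- `λ_m := Σ_r |α_{m r}|`. -/
noncomputable def lam {rmax : ℕ} (α : ℕ → Fin rmax → ℝ) (m : ℕ) : ℝ :=
  ∑ r : Fin rmax, |α m r|

/-- `Λ(t) := Σ_{l=0}^k t^l/(k+1+l)`. -/
noncomputable def Lam (t : ℝ) : ℝ :=
  ∑ l ∈ Finset.range (k + 1), t ^ l / (k + 1 + l)

/-- `p_m(t) := t^m/((m+1+k) Λ(t))`. -/
noncomputable def pm (m : ℕ) (t : ℝ) : ℝ :=
  t ^ m / ((m + 1 + k) * Lam k t)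

/-- `p_{r|m} := |α_{m r}|/λ_m`. -/
noncomputable def prm {rmax : ℕ} (α : ℕ → Fin rmax → ℝ) (m : ℕ) (r : Fin rmax) : ℝ :=
  |α m r| / lam α m

/-- `θ_{m r}(t) := t^{k+1} sign(α_{m r}) Λ(t) λ_m`. -/
noncomputable def theta {rmax : ℕ} (α : ℕ → Fin rmax → ℝ) (m : ℕ) (r : Fin rmax)
    (t : ℝ) : ℝ :=
  t ^ (k + 1) * Real.sign (α m r) * Lam k t * lam α m

/-- The sampled rotation `exp(i θ_{m r}(t) P_r)`. -/
noncomputable def rot {n rmax : ℕ} (P : Fin rmax → Matrix (Fin n) (Fin n) ℂ)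
    (α : ℕ → Fin rmax → ℝ) (m : ℕ) (r : Fin rmax) (t : ℝ) :
    Matrix (Fin n) (Fin n) ℂ :=
  NormedSpace.exp ((Complex.I * (theta k α m r t : ℂ)) • P r)

/-- `λ̃ := max_{0 ≤ m ≤ k} λ_m`. -/
noncomputable def lamTilde {rmax : ℕ} (α : ℕ → Fin rmax → ℝ) : ℝ :=
  (Finset.range (k + 1)).sup' (Finset.nonempty_range_iff.mpr k.succ_ne_zero) (lam α)

lemma exp_I_smul_sub_one_norm_le {n : ℕ} (P : Matrix (Fin n) (Fin n) ℂ)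
    (hP : Pᴴ = P) (hPn : ‖P‖ ≤ 1) (θ : ℝ) :
    ‖NormedSpace.exp ((Complex.I * (θ : ℂ)) • P) - 1‖ ≤ |θ| := by
  have hskew : ∀ c : ℝ, ((Complex.I * (c : ℂ)) • P) ∈
      skewAdjoint (Matrix (Fin n) (Fin n) ℂ) := by
    intro c
    rw [skewAdjoint.mem_iff, star_smul, Matrix.star_eq_conjTranspose, hP, ← neg_smul]
    congr 1
    simp [Complex.ext_iff]
  have huni : ∀ c : ℝ, NormedSpace.exp ((Complex.I * (c : ℂ)) • P) ∈
      unitary (Matrix (Fin n) (Fin n) ℂ) := fun c => by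
    letI : NormedAlgebra ℚ (Matrix (Fin n) (Fin n) ℂ) := NormedAlgebra.restrictScalars ℚ ℂ _
    exact NormedSpace.exp_mem_unitary_of_mem_skewAdjoint (hskew c)
  set x : Matrix (Fin n) (Fin n) ℂ := (Complex.I * (θ : ℂ)) • P with hxdef
  have hxnorm : ‖x‖ ≤ |θ| := by
    rw [hxdef, norm_smul, norm_mul, Complex.norm_I, one_mul, Complex.norm_real,
      Real.norm_eq_abs]
    calc |θ| * ‖P‖ ≤ |θ| * 1 := by gcongr
      _ = |θ| := mul_one _
  have hsm : ∀ t : ℝ, (t : ℂ) • x = (Complex.I * ((θ * t : ℝ) : ℂ)) • P := by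
    intro t
    rw [hxdef, smul_smul]
    congr 1
    push_cast
    ring
  have hder : ∀ t : ℝ, HasDerivAt (fun u : ℝ => NormedSpace.exp ((u : ℂ) • x))
      (NormedSpace.exp ((t : ℂ) • x) * x) t := by
    intro t
    have h1 := _root_.hasDerivAt_exp_smul_const (𝕂 := ℂ) x (t : ℂ)
    have h2 := HasDerivAt.scomp (𝕜 := ℝ) t h1 Complex.ofRealCLM.hasDerivAt
    simp only [Complex.ofRealCLM_apply, Complex.ofReal_one, one_smul] at h2
    exact h2
  have hbound : ∀ t ∈ Set.Ico (0:ℝ) 1, ‖NormedSpace.exp ((t : ℂ) • x) * x‖ ≤ |θ| := by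
    intro t _
    rw [hsm t]
    calc ‖NormedSpace.exp ((Complex.I * ((θ * t : ℝ) : ℂ)) • P) * x‖
        = ‖x‖ := CStarRing.norm_coe_unitary_mul ⟨_, huni (θ * t)⟩ x
      _ ≤ |θ| := hxnorm
  have := norm_image_sub_le_of_norm_deriv_le_segment_01'
    (f := fun u : ℝ => NormedSpace.exp ((u : ℂ) • x))
    (f' := fun t => NormedSpace.exp ((t : ℂ) • x) * x)
    (fun t _ => (hder t).hasDerivWithinAt) hbound
  simpa [one_smul, zero_smul, NormedSpace.exp_zero] using this

lemma lam_nonneg {rmax : ℕ} (α : ℕ → Fin rmax → ℝ) (m : ℕ) : 0 ≤ lam α m :=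
  Finset.sum_nonneg fun _ _ => abs_nonneg _

lemma Lam_pos {s : ℝ} (hs : 0 ≤ s) : 0 < Lam k s := by
  unfold Lam
  apply Finset.sum_pos'
  · intro l _; positivity
  · refine ⟨0, Finset.mem_range.mpr (Nat.succ_pos k), ?_⟩
    simp only [pow_zero]
    positivity

lemma Lam_nonneg {s : ℝ} (hs : 0 ≤ s) : 0 ≤ Lam k s := (Lam_pos k hs).le

lemma Lam_le_one {s : ℝ} (hs : s ∈ Set.Icc (0:ℝ) 1) : Lam k s ≤ 1 := by
  have h : Lam k s ≤ ∑ l ∈ Finset.range (k + 1), 1 / ((k : ℝ) + 1) := by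
    unfold Lam
    apply Finset.sum_le_sum
    intro l _
    apply div_le_div₀ zero_le_one (pow_le_one₀ hs.1 hs.2) (by positivity)
    have : (0:ℝ) ≤ l := Nat.cast_nonneg l
    linarith
  calc Lam k s ≤ ∑ l ∈ Finset.range (k + 1), 1 / ((k : ℝ) + 1) := h
    _ = 1 := by
      rw [Finset.sum_const, Finset.card_range, nsmul_eq_mul]
      push_cast
      field_simp

lemma lam_le_lamTilde {rmax : ℕ} (α : ℕ → Fin rmax → ℝ) {m : ℕ} (hm : m ≤ k) :
    lam α m ≤ lamTilde k α :=
  Finset.le_sup' (lam α) (Finset.mem_range.mpr (Nat.lt_succ_of_le hm))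

lemma lamTilde_nonneg {rmax : ℕ} (α : ℕ → Fin rmax → ℝ) : 0 ≤ lamTilde k α :=
  le_trans (lam_nonneg α 0) (lam_le_lamTilde k α (Nat.zero_le k))

lemma abs_theta_le {rmax : ℕ} (α : ℕ → Fin rmax → ℝ) {m : ℕ} (hm : m ≤ k)
    (r : Fin rmax) {s : ℝ} (hs : s ∈ Set.Icc (0:ℝ) 1) :
    |theta k α m r s| ≤ s ^ (k + 1) * lamTilde k α := by
  have habs : |theta k α m r s|
      = s ^ (k + 1) * |Real.sign (α m r)| * Lam k s * lam α m := by
    unfold theta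
    rw [abs_mul, abs_mul, abs_mul, abs_pow, abs_of_nonneg hs.1,
      abs_of_nonneg (Lam_nonneg k hs.1), abs_of_nonneg (lam_nonneg α m)]
  have hsign : |Real.sign (α m r)| ≤ 1 := by
    rcases Real.sign_apply_eq (α m r) with h | h | h <;> rw [h] <;> norm_num
  calc |theta k α m r s| = s ^ (k + 1) * |Real.sign (α m r)| * Lam k s * lam α m := habs
    _ ≤ s ^ (k + 1) * 1 * 1 * lamTilde k α := by
        have hp : (0:ℝ) ≤ s ^ (k + 1) := pow_nonneg hs.1 _
        have h1 := Lam_le_one k hs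
        have h2 := lam_le_lamTilde k α hm
        have h3 := lam_nonneg α m
        have h4 := Lam_nonneg k hs.1
        gcongr <;> first | assumption | nlinarith [hp, h3, h4]
    _ = s ^ (k + 1) * lamTilde k α := by ring

lemma sum_pm {s : ℝ} (hs : 0 ≤ s) : ∑ m' ∈ Finset.range (k + 1), pm k m' s = 1 := by
  have hL := Lam_pos k hs
  calc ∑ m' ∈ Finset.range (k + 1), pm k m' s
      = ∑ m' ∈ Finset.range (k + 1), s ^ m' / ((k : ℝ) + 1 + m') / Lam k s := by
        refine Finset.sum_congr rfl fun l _ => ?_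
        rw [pm, div_div]
        congr 1
        ring
    _ = Lam k s / Lam k s := by rw [← Finset.sum_div]; rfl
    _ = 1 := div_self hL.ne'

lemma sum_prm {rmax : ℕ} (α : ℕ → Fin rmax → ℝ) {m : ℕ} (h : 0 < lam α m) :
    ∑ r : Fin rmax, prm α m r = 1 := by
  unfold prm
  rw [← Finset.sum_div, ← lam, div_self h.ne']

/-- each realization of the sampled rotation deviates from the ensemble
mean by at most `2(k+1) λ̃ s^{k+1}` in operator norm. -/
theorem stmt4 {n rmax : ℕ} (hrmax : 1 ≤ rmax)
    (P : Fin rmax → Matrix (Fin n) (Fin n) ℂ)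
    (hP : ∀ r, (P r)ᴴ = P r) (hPnorm : ∀ r, ‖P r‖ = 1)
    (α : ℕ → Fin rmax → ℝ)
    (hlam : ∀ m ≤ k, 0 < lam α m) :
    ∀ s ∈ Set.Icc (0:ℝ) 1, ∀ m ≤ k, ∀ r : Fin rmax,
      ‖rot k P α m r s -
          ∑ m' ∈ Finset.range (k + 1), ∑ r' : Fin rmax,
            (pm k m' s * prm α m' r') • rot k P α m' r' s‖
        ≤ 2 * (k + 1) * lamTilde k α * s ^ (k + 1) := by
  intro s hs m hm r
  have hL := Lam_pos k hs.1
  have hw_nonneg : ∀ m' ∈ Finset.range (k + 1), ∀ r' : Fin rmax,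
      0 ≤ pm k m' s * prm α m' r' := by
    intro m' _ r'
    apply mul_nonneg
    · exact div_nonneg (pow_nonneg hs.1 _)
        (mul_nonneg (by positivity) hL.le)
    · exact div_nonneg (abs_nonneg _) (lam_nonneg α m')
  have hw_sum : ∑ m' ∈ Finset.range (k + 1), ∑ r' : Fin rmax,
      pm k m' s * prm α m' r' = 1 := by
    have h : ∀ m' ∈ Finset.range (k + 1),
        ∑ r' : Fin rmax, pm k m' s * prm α m' r' = pm k m' s := by
      intro m' hm'
      rw [← Finset.mul_sum,
        sum_prm α (hlam m' (Nat.lt_succ_iff.mp (Finset.mem_range.mp hm'))), mul_one]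
    rw [Finset.sum_congr rfl h, sum_pm k hs.1]
  have hrot : ∀ m' ≤ k, ∀ r' : Fin rmax,
      ‖rot k P α m' r' s - 1‖ ≤ s ^ (k + 1) * lamTilde k α := by
    intro m' hm' r'
    calc ‖rot k P α m' r' s - 1‖ ≤ |theta k α m' r' s| := by
          rw [rot]
          exact exp_I_smul_sub_one_norm_le (P r') (hP r') (le_of_eq (hPnorm r')) _
      _ ≤ _ := abs_theta_le k α hm' r' hs
  have hpair : ∀ m' ≤ k, ∀ r' : Fin rmax,
      ‖rot k P α m r s - rot k P α m' r' s‖ ≤ 2 * (s ^ (k + 1) * lamTilde k α) := by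
    intro m' hm' r'
    have h1 := hrot m hm r
    have h2 := hrot m' hm' r'
    calc ‖rot k P α m r s - rot k P α m' r' s‖
        = ‖(rot k P α m r s - 1) - (rot k P α m' r' s - 1)‖ := by
          rw [sub_sub_sub_cancel_right]
      _ ≤ ‖rot k P α m r s - 1‖ + ‖rot k P α m' r' s - 1‖ := norm_sub_le _ _
      _ ≤ 2 * (s ^ (k + 1) * lamTilde k α) := by linarith
  have hexpand : rot k P α m r s -
      ∑ m' ∈ Finset.range (k + 1), ∑ r' : Fin rmax,
        (pm k m' s * prm α m' r') • rot k P α m' r' s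
      = ∑ m' ∈ Finset.range (k + 1), ∑ r' : Fin rmax,
        (pm k m' s * prm α m' r') • (rot k P α m r s - rot k P α m' r' s) := by
    rw [eq_comm]
    simp only [smul_sub, Finset.sum_sub_distrib, ← Finset.sum_smul]
    rw [hw_sum, one_smul]
  rw [hexpand]
  calc ‖∑ m' ∈ Finset.range (k + 1), ∑ r' : Fin rmax,
        (pm k m' s * prm α m' r') • (rot k P α m r s - rot k P α m' r' s)‖
      ≤ ∑ m' ∈ Finset.range (k + 1), ‖∑ r' : Fin rmax,
          (pm k m' s * prm α m' r') • (rot k P α m r s - rot k P α m' r' s)‖ :=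
        norm_sum_le _ _
    _ ≤ ∑ m' ∈ Finset.range (k + 1), ∑ r' : Fin rmax,
          ‖(pm k m' s * prm α m' r') • (rot k P α m r s - rot k P α m' r' s)‖ :=
        Finset.sum_le_sum fun m' _ => norm_sum_le _ _
    _ ≤ ∑ m' ∈ Finset.range (k + 1), ∑ r' : Fin rmax,
          (pm k m' s * prm α m' r') * (2 * (s ^ (k + 1) * lamTilde k α)) := by
        refine Finset.sum_le_sum fun m' hm' => Finset.sum_le_sum fun r' _ => ?_
        rw [norm_smul, Real.norm_eq_abs, abs_of_nonneg (hw_nonneg m' hm' r')]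
        exact mul_le_mul_of_nonneg_left
          (hpair m' (Nat.lt_succ_iff.mp (Finset.mem_range.mp hm')) r')
          (hw_nonneg m' hm' r')
    _ = 2 * (s ^ (k + 1) * lamTilde k α) := by
        simp only [← Finset.sum_mul]
        rw [hw_sum, one_mul]
    _ ≤ 2 * (k + 1) * lamTilde k α * s ^ (k + 1) := by
        have h := mul_nonneg (mul_nonneg (Nat.cast_nonneg k : (0:ℝ) ≤ k)
          (lamTilde_nonneg k α)) (pow_nonneg hs.1 (k + 1))
        nlinarith [h]


end Stmt4
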